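/- Lemma 4 (Influence of a learning agent). Let θ_TX = θ₀ and run the partial-information algorithm with self-awareness, under Assumptions 1, 2 and 4. If for a certain agent h the belief satisfies μ_{h,i}(θ_TX) → 1 in probability as i → ∞, then μ_{k,i}(θ_TX) → 1 in probability for every agent k ≠ h. -/

import Mathlib

open MeasureTheory ProbabilityTheory Filter Topology
open scoped ENNReal NNReal

lemma aux_jensen_exp {ι : Type*} (s : Finset ι) (w t : ι → ℝ)
    (h0 : ∀ i ∈ s, 0 ≤ w i) (h1 : ∑ i ∈ s, w i = 1) :
    Real.exp (∑ i ∈ s, w i * t i) ≤ ∑ i ∈ s, w i * Real.exp (t i) := by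
  have := convexOn_exp.map_sum_le (t := s) (w := w) (p := t) h0 h1
    (fun i _ => Set.mem_univ _)
  simpa [smul_eq_mul] using this

lemma aux_markov {Ω : Type} [MeasurableSpace Ω] (P : Measure Ω) (f : Ω → ℝ)
    (hf : Measurable f) (B : ℝ≥0∞) (hB : ∫⁻ ω, ENNReal.ofReal (f ω) ∂P ≤ B)
    (T : ℝ) (hT : 0 < T) : P {ω | T ≤ f ω} ≤ B / ENNReal.ofReal T := by
  have hsub : {ω | T ≤ f ω} ⊆ {ω | ENNReal.ofReal T ≤ ENNReal.ofReal (f ω)} :=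
    fun ω hω => ENNReal.ofReal_le_ofReal hω
  refine le_trans (measure_mono hsub) (le_trans ?_ (ENNReal.div_le_div_right hB _))
  exact meas_ge_le_lintegral_div (hf.ennreal_ofReal.aemeasurable)
    (by simpa using (ENNReal.ofReal_pos.mpr hT).ne') ENNReal.ofReal_ne_top

lemma aux_div_le (B : ℝ≥0∞) (hB : B ≠ ⊤) (η : ℝ) (hη : 0 < η) :
    ∃ T : ℝ, 1 ≤ T ∧ B / ENNReal.ofReal T ≤ ENNReal.ofReal η := by
  refine ⟨max 1 (B.toReal / η + 1), le_max_left _ _, ?_⟩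
  refine ENNReal.div_le_of_le_mul ?_
  have h1 : B ≤ ENNReal.ofReal (B.toReal + η) := by
    conv_lhs => rw [← ENNReal.ofReal_toReal hB]
    exact ENNReal.ofReal_le_ofReal (by linarith)
  refine le_trans h1 ?_
  rw [← ENNReal.ofReal_mul hη.le]
  refine ENNReal.ofReal_le_ofReal ?_
  have : η * (B.toReal / η + 1) = B.toReal + η := by
    rw [mul_add, mul_one, mul_div_cancel₀ _ hη.ne']
  calc B.toReal + η = η * (B.toReal / η + 1) := this.symm
    _ ≤ η * max 1 (B.toReal / η + 1) := by
        exact mul_le_mul_of_nonneg_left (le_max_right _ _) hη.le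

set_option maxHeartbeats 4000000 in
theorem influence_of_a_learning_agent
    {Ω : Type} [mΩ : MeasurableSpace Ω] (P : Measure Ω) [IsProbabilityMeasure P]
    (K H : ℕ) (hK : 0 < K) (hH : 2 ≤ H)
    (X : Fin K → Type) [∀ k, MeasurableSpace (X k)]
    (ν : ∀ k, Measure (X k))
    (L : ∀ k : Fin K, Fin H → X k → ℝ)
    (θ0 : Fin H)
    (hLpos : ∀ k θ x, 0 < L k θ x)
    (hLmeas : ∀ k θ, Measurable (L k θ))
    (hLdens : ∀ k θ, ∫ x, L k θ x ∂(ν k) = 1)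
    (ξ : ∀ k : Fin K, ℕ → Ω → X k)
    (hξmeas : ∀ k i, Measurable (ξ k i))
    (hξdist : ∀ k (i : ℕ), 1 ≤ i →
      Measure.map (ξ k i) P = (ν k).withDensity (fun x => ENNReal.ofReal (L k θ0 x)))
    (hξindep : iIndepFun
      (fun (i : ℕ) (ω : Ω) (k : Fin K) => ξ k (i + 1) ω) P)
    (hKL : ∀ k θ θ',
      Integrable (fun x => L k θ x * Real.log (L k θ x / L k θ' x)) (ν k))
    (a : Fin K → Fin K → ℝ)
    (ha_nonneg : ∀ ℓ k, 0 ≤ a ℓ k)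
    (ha_stoch : ∀ k, ∑ ℓ, a ℓ k = 1)
    (ha_prim : ∃ n : ℕ, ∀ ℓ k, 0 < ((Matrix.of a) ^ n) ℓ k)
    (v : Fin K → ℝ)
    (hv_pos : ∀ ℓ, 0 < v ℓ)
    (hv_sum : ∑ ℓ, v ℓ = 1)
    (hv_eig : ∀ ℓ, ∑ k, a ℓ k * v k = v ℓ)
    (ha_self : ∀ k, 0 < a k k)
    (θTX : Fin H)
    (hθTX : θTX = θ0)
    (μb ψ ψh : Fin K → ℕ → Fin H → Ω → ℝ)
    (μinit : Fin K → Fin H → ℝ)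
    (hμinit_pos : ∀ k θ, 0 < μinit k θ)
    (hμinit_sum : ∀ k, ∑ θ, μinit k θ = 1)
    (hμb0 : ∀ k θ ω, μb k 0 θ ω = μinit k θ)
    (hψ : ∀ k (i : ℕ) θ ω, ψ k (i + 1) θ ω =
      μb k i θ ω * L k θ (ξ k (i + 1) ω) /
        ∑ θ', μb k i θ' ω * L k θ' (ξ k (i + 1) ω))
    (hψh_tx : ∀ k (i : ℕ) ω, ψh k (i + 1) θTX ω = ψ k (i + 1) θTX ω)
    (hψh_ntx : ∀ k (i : ℕ) θ ω, θ ≠ θTX →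
      ψh k (i + 1) θ ω = (1 - ψ k (i + 1) θTX ω) / ((H : ℝ) - 1))
    (hcomb : ∀ k (i : ℕ) θ ω, μb k (i + 1) θ ω =
      Real.exp (a k k * Real.log (ψ k (i + 1) θ ω) +
          ∑ ℓ ∈ Finset.univ.erase k, a ℓ k * Real.log (ψh ℓ (i + 1) θ ω)) /
        ∑ θ', Real.exp (a k k * Real.log (ψ k (i + 1) θ' ω) +
          ∑ ℓ ∈ Finset.univ.erase k, a ℓ k * Real.log (ψh ℓ (i + 1) θ' ω)))
    (hclear : ∃ (kstar : Fin K) (c : ℝ), 0 < c ∧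
      (∃ θ : Fin H, 0 < (∫ ω, Real.log (L kstar θ0 (ξ kstar 1 ω) / L kstar θ (ξ kstar 1 ω)) ∂P)) ∧
      ∀ α : Fin H → ℝ, (∀ τ, 0 ≤ α τ) → (∑ τ, α τ = 1) →
        (∀ τ, α τ ≠ 0 → 0 < (∫ ω, Real.log (L kstar θ0 (ξ kstar 1 ω) / L kstar τ (ξ kstar 1 ω)) ∂P)) →
        c ≤ ∫ x, |L kstar θ0 x - ∑ τ, α τ * L kstar τ x| ∂(ν kstar))
    (h : Fin K)
    (hh : TendstoInMeasure P (fun (i : ℕ) ω => μb h i θTX ω) atTop (fun _ => (1 : ℝ))) :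
    ∀ k : Fin K, k ≠ h →
      TendstoInMeasure P (fun (i : ℕ) ω => μb k i θTX ω) atTop (fun _ => (1 : ℝ)) := by
  subst hθTX
  classical
  have hH1 : (1:ℝ) ≤ (H:ℝ) - 1 := by
    have : (2:ℝ) ≤ (H:ℝ) := by exact_mod_cast hH
    linarith
  -- positivity and normalization of beliefs
  have hFHne : (Finset.univ : Finset (Fin H)).Nonempty := ⟨θTX, Finset.mem_univ _⟩
  have hμpos : ∀ (i : ℕ) (k : Fin K) θ ω, 0 < μb k i θ ω := by
    intro i k θ ω
    cases i with
    | zero => rw [hμb0]; exact hμinit_pos k θ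
    | succ i =>
        rw [hcomb]
        exact div_pos (Real.exp_pos _)
          (Finset.sum_pos (fun θ' _ => Real.exp_pos _) hFHne)
  have hμsum : ∀ (i : ℕ) (k : Fin K) ω, ∑ θ, μb k i θ ω = 1 := by
    intro i k ω
    cases i with
    | zero => simp_rw [hμb0]; exact hμinit_sum k
    | succ i =>
        simp_rw [hcomb, ← Finset.sum_div]
        exact div_self (Finset.sum_pos (fun θ' _ => Real.exp_pos _) hFHne).ne'
  have hμle1 : ∀ (i : ℕ) (k : Fin K) θ ω, μb k i θ ω ≤ 1 := by
    intro i k θ ω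
    rw [← hμsum i k ω]
    exact Finset.single_le_sum (fun θ' _ => (hμpos i k θ' ω).le) (Finset.mem_univ θ)
  have hSpos : ∀ (k : Fin K) (i : ℕ) ω,
      0 < ∑ θ', μb k i θ' ω * L k θ' (ξ k (i+1) ω) :=
    fun k i ω => Finset.sum_pos
      (fun θ' _ => mul_pos (hμpos i k θ' ω) (hLpos k θ' _)) hFHne
  have hψpos : ∀ (k : Fin K) (i : ℕ) θ ω, 0 < ψ k (i+1) θ ω := by
    intro k i θ ω
    rw [hψ]
    exact div_pos (mul_pos (hμpos i k θ ω) (hLpos k θ _)) (hSpos k i ω)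
  have hψsum : ∀ (k : Fin K) (i : ℕ) ω, ∑ θ, ψ k (i+1) θ ω = 1 := by
    intro k i ω
    simp_rw [hψ, ← Finset.sum_div]
    exact div_self (hSpos k i ω).ne'
  have hθother : ∃ θ' : Fin H, θ' ≠ θTX := by
    rcases eq_or_ne θTX ⟨0, by omega⟩ with h0 | h0
    · exact ⟨⟨1, by omega⟩, by rw [h0]; simp [Fin.ext_iff]⟩
    · exact ⟨⟨0, by omega⟩, Ne.symm h0⟩
  have hψlt1 : ∀ (k : Fin K) (i : ℕ) ω, ψ k (i+1) θTX ω < 1 := by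
    intro k i ω
    obtain ⟨θ', hθ'⟩ := hθother
    have hs := hψsum k i ω
    rw [← Finset.add_sum_erase _ _ (Finset.mem_univ θ')] at hs
    have hmem : θTX ∈ Finset.univ.erase θ' := by
      simp [Ne.symm hθ']
    have h1 : ψ k (i+1) θTX ω ≤ ∑ θ ∈ Finset.univ.erase θ', ψ k (i+1) θ ω :=
      Finset.single_le_sum (fun θ _ => (hψpos k i θ ω).le) hmem
    have := hψpos k i θ' ω
    linarith
  have hψhpos : ∀ (k : Fin K) (i : ℕ) θ ω, 0 < ψh k (i+1) θ ω := by
    intro k i θ ω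
    rcases eq_or_ne θ θTX with rfl | hθ
    · rw [hψh_tx]; exact hψpos k i θ ω
    · rw [hψh_ntx k i θ ω hθ]
      exact div_pos (by linarith [hψlt1 k i ω]) (by linarith)
  have hcard : ((Finset.univ.erase θTX).card : ℝ) = (H : ℝ) - 1 := by
    rw [Finset.card_erase_of_mem (Finset.mem_univ _), Finset.card_univ, Fintype.card_fin]
    rw [Nat.cast_sub (by omega), Nat.cast_one]
  have hψhsum : ∀ (k : Fin K) (i : ℕ) ω, ∑ θ, ψh k (i+1) θ ω = 1 := by
    intro k i ω
    rw [← Finset.add_sum_erase _ _ (Finset.mem_univ θTX), hψh_tx]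
    rw [Finset.sum_congr rfl
      (fun θ hθ => hψh_ntx k i θ ω (Finset.ne_of_mem_erase hθ))]
    rw [Finset.sum_const, nsmul_eq_mul, hcard]
    have hne : (H : ℝ) - 1 ≠ 0 := by linarith
    have : ((H:ℝ) - 1) * ((1 - ψ k (i+1) θTX ω) / ((H:ℝ) - 1))
        = 1 - ψ k (i+1) θTX ω := by field_simp
    linarith
  -- identity I : inverse of ψ at θTX
  have hinv_ψ : ∀ (k : Fin K) (i : ℕ) ω, (ψ k (i+1) θTX ω)⁻¹ =
      1 + ∑ θ ∈ Finset.univ.erase θTX,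
        (μb k i θ ω / μb k i θTX ω) * (L k θ (ξ k (i+1) ω) / L k θTX (ξ k (i+1) ω)) := by
    intro k i ω
    rw [hψ, inv_div, Finset.sum_div,
      ← Finset.add_sum_erase _ _ (Finset.mem_univ θTX)]
    rw [div_self (mul_pos (hμpos i k θTX ω) (hLpos k θTX _)).ne']
    congr 1
    refine Finset.sum_congr rfl (fun θ hθ => ?_)
    rw [div_mul_div_comm]
  -- inverse of μ as a sum of belief ratios
  have hinv1μ : ∀ (i : ℕ) (k : Fin K) ω, (μb k i θTX ω)⁻¹ =
      1 + ∑ θ ∈ Finset.univ.erase θTX, μb k i θ ω / μb k i θTX ω := by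
    intro i k ω
    have : (1:ℝ) + ∑ θ ∈ Finset.univ.erase θTX, μb k i θ ω / μb k i θTX ω
        = ∑ θ, μb k i θ ω / μb k i θTX ω := by
      rw [← Finset.add_sum_erase _ (fun θ => μb k i θ ω / μb k i θTX ω)
        (Finset.mem_univ θTX), div_self (hμpos i k θTX ω).ne']
    rw [this, ← Finset.sum_div, hμsum i k ω, one_div]
  -- exponent rewriting
  have hEsum : ∀ (k : Fin K) (i : ℕ) (θ : Fin H) ω,
      a k k * Real.log (ψ k (i+1) θ ω) +
        ∑ ℓ ∈ Finset.univ.erase k, a ℓ k * Real.log (ψh ℓ (i+1) θ ω)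
      = ∑ ℓ, a ℓ k * Real.log (if ℓ = k then ψ ℓ (i+1) θ ω else ψh ℓ (i+1) θ ω) := by
    intro k i θ ω
    rw [← Finset.add_sum_erase _
      (fun ℓ => a ℓ k * Real.log (if ℓ = k then ψ ℓ (i+1) θ ω else ψh ℓ (i+1) θ ω))
      (Finset.mem_univ k)]
    congr 1
    · simp
    · refine Finset.sum_congr rfl (fun ℓ hℓ => ?_)
      rw [if_neg (Finset.ne_of_mem_erase hℓ)]
  have hBpos : ∀ (k ℓ : Fin K) (i : ℕ) (θ : Fin H) ω,
      0 < (if ℓ = k then ψ ℓ (i+1) θ ω else ψh ℓ (i+1) θ ω) := by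
    intro k ℓ i θ ω
    split
    · exact hψpos ℓ i θ ω
    · exact hψhpos ℓ i θ ω
  have hBtx : ∀ (k ℓ : Fin K) (i : ℕ) ω,
      (if ℓ = k then ψ ℓ (i+1) θTX ω else ψh ℓ (i+1) θTX ω) = ψ ℓ (i+1) θTX ω := by
    intro k ℓ i ω
    split
    · rfl
    · exact hψh_tx ℓ i ω
  -- ratio of updated beliefs as exponential
  have hEq : ∀ (k : Fin K) (i : ℕ) θ ω,
      μb k (i+1) θ ω / μb k (i+1) θTX ω =
      Real.exp (∑ ℓ, a ℓ k *
        (Real.log (if ℓ = k then ψ ℓ (i+1) θ ω else ψh ℓ (i+1) θ ω) -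
         Real.log (if ℓ = k then ψ ℓ (i+1) θTX ω else ψh ℓ (i+1) θTX ω))) := by
    intro k i θ ω
    have hD : 0 < ∑ θ', Real.exp (a k k * Real.log (ψ k (i+1) θ' ω) +
        ∑ ℓ ∈ Finset.univ.erase k, a ℓ k * Real.log (ψh ℓ (i+1) θ' ω)) :=
      Finset.sum_pos (fun θ' _ => Real.exp_pos _) hFHne
    rw [hcomb k i θ ω, hcomb k i θTX ω]
    rw [div_div_div_cancel_right₀ _ _]
    rw [← Real.exp_sub, hEsum, hEsum, ← Finset.sum_sub_distrib]
    congr 1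
    · refine Finset.sum_congr rfl (fun ℓ _ => ?_)
      rw [mul_sub]
    · exact hD.ne'
  -- identity II : convexity bound
  have hinv_μ : ∀ (k : Fin K) (i : ℕ) ω, (μb k (i+1) θTX ω)⁻¹ ≤
      ∑ ℓ, a ℓ k * (ψ ℓ (i+1) θTX ω)⁻¹ := by
    intro k i ω
    have hsum1 : (μb k (i+1) θTX ω)⁻¹ = ∑ θ', μb k (i+1) θ' ω / μb k (i+1) θTX ω := by
      rw [← Finset.sum_div, hμsum (i+1) k ω, one_div]
    rw [hsum1]
    have step1 : ∀ θ' : Fin H, μb k (i+1) θ' ω / μb k (i+1) θTX ω ≤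
        ∑ ℓ, a ℓ k * ((if ℓ = k then ψ ℓ (i+1) θ' ω else ψh ℓ (i+1) θ' ω) /
          ψ ℓ (i+1) θTX ω) := by
      intro θ'
      rw [hEq k i θ' ω]
      refine le_trans (aux_jensen_exp Finset.univ (fun ℓ => a ℓ k) _
        (fun ℓ _ => ha_nonneg ℓ k) (ha_stoch k)) ?_
      refine le_of_eq (Finset.sum_congr rfl (fun ℓ _ => ?_))
      rw [Real.exp_sub, Real.exp_log (hBpos k ℓ i θ' ω), hBtx k ℓ i ω,
        Real.exp_log (hψpos ℓ i θTX ω)]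
    refine le_trans (Finset.sum_le_sum (fun θ' _ => step1 θ')) (le_of_eq ?_)
    rw [Finset.sum_comm]
    refine Finset.sum_congr rfl (fun ℓ _ => ?_)
    rw [← Finset.mul_sum, ← Finset.sum_div]
    have hsB : (∑ θ', if ℓ = k then ψ ℓ (i+1) θ' ω else ψh ℓ (i+1) θ' ω) = 1 := by
      split
      · exact hψsum ℓ i ω
      · exact hψhsum ℓ i ω
    rw [hsB, one_div]
  -- product form of the ratio
  have hratio : ∀ (k : Fin K) (i : ℕ) θ ω,
      μb k (i+1) θ ω / μb k (i+1) θTX ω =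
      ∏ ℓ, ((if ℓ = k then ψ ℓ (i+1) θ ω else ψh ℓ (i+1) θ ω) /
            (ψ ℓ (i+1) θTX ω)) ^ (a ℓ k) := by
    intro k i θ ω
    rw [hEq k i θ ω, Real.exp_sum]
    refine Finset.prod_congr rfl (fun ℓ _ => ?_)
    rw [hBtx k ℓ i ω, ← Real.log_div (hBpos k ℓ i θ ω).ne' (hψpos ℓ i θTX ω).ne']
    rw [Real.rpow_def_of_pos (div_pos (hBpos k ℓ i θ ω) (hψpos ℓ i θTX ω)), mul_comm]
  -- measurable representation of beliefs in terms of the signal history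
  have hmeasfun : ∀ (i : ℕ), ∃ g : Fin K → Fin H → ((Fin i → ∀ k, X k) → ℝ),
      (∀ k θ, Measurable (g k θ)) ∧
      ∀ k θ ω, μb k i θ ω = g k θ (fun j k' => ξ k' ((j : ℕ)+1) ω) := by
    intro i
    induction i with
    | zero =>
        exact ⟨fun k θ _ => μinit k θ, fun k θ => measurable_const,
          fun k θ ω => hμb0 k θ ω⟩
    | succ i ih =>
        obtain ⟨g, hgm, hg⟩ := ih
        set prev : (Fin (i+1) → ∀ k, X k) → (Fin i → ∀ k, X k) :=
          fun x j => x j.castSucc with hprev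
        have hprevm : Measurable prev :=
          measurable_pi_lambda _ (fun j => measurable_pi_apply _)
        set lastf : (Fin (i+1) → ∀ k, X k) → (∀ k, X k) :=
          fun x => x (Fin.last i) with hlast
        have hlastm : Measurable lastf := measurable_pi_apply _
        set Gψ : Fin K → Fin H → (Fin (i+1) → ∀ k, X k) → ℝ :=
          fun k θ x => g k θ (prev x) * L k θ (lastf x k) /
            ∑ θ', g k θ' (prev x) * L k θ' (lastf x k) with hGψ
        have hGψm : ∀ k θ, Measurable (Gψ k θ) := by
          intro k θ
          refine Measurable.div ?_ ?_
          · exact ((hgm k θ).comp hprevm).mul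
              ((hLmeas k θ).comp ((measurable_pi_apply k).comp hlastm))
          · exact Finset.measurable_sum _ (fun θ' _ =>
              ((hgm k θ').comp hprevm).mul
                ((hLmeas k θ').comp ((measurable_pi_apply k).comp hlastm)))
        set Gψh : Fin K → Fin H → (Fin (i+1) → ∀ k, X k) → ℝ :=
          fun k θ x => if θ = θTX then Gψ k θTX x else (1 - Gψ k θTX x) / ((H:ℝ)-1)
            with hGψh
        have hGψhm : ∀ k θ, Measurable (Gψh k θ) := by
          intro k θ
          by_cases hθ : θ = θTX <;> simp only [hGψh, hθ, if_true, if_false]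
          · exact hGψm k θTX
          · exact ((measurable_const.sub (hGψm k θTX)).div measurable_const)
        refine ⟨fun k θ x => Real.exp (a k k * Real.log (Gψ k θ x) +
            ∑ ℓ ∈ Finset.univ.erase k, a ℓ k * Real.log (Gψh ℓ θ x)) /
          ∑ θ', Real.exp (a k k * Real.log (Gψ k θ' x) +
            ∑ ℓ ∈ Finset.univ.erase k, a ℓ k * Real.log (Gψh ℓ θ' x)), ?_, ?_⟩
        · intro k θ
          have hterm : ∀ θ', Measurable (fun x =>
              Real.exp (a k k * Real.log (Gψ k θ' x) +
                ∑ ℓ ∈ Finset.univ.erase k, a ℓ k * Real.log (Gψh ℓ θ' x))) := by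
            intro θ'
            refine Measurable.exp (Measurable.add ?_ ?_)
            · exact measurable_const.mul ((hGψm k θ').log)
            · exact Finset.measurable_sum _ (fun ℓ _ =>
                measurable_const.mul ((hGψhm ℓ θ').log))
          exact (hterm θ).div (Finset.measurable_sum _ (fun θ' _ => hterm θ'))
        · intro k θ ω
          have hhist : ∀ (kk : Fin K) (θθ : Fin H),
              Gψ kk θθ (fun j k' => ξ k' ((j:ℕ)+1) ω) = ψ kk (i+1) θθ ω := by
            intro kk θθ
            have hp : prev (fun (j : Fin (i+1)) (k' : Fin K) => ξ k' ((j:ℕ)+1) ω)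
                = (fun (j : Fin i) (k' : Fin K) => ξ k' ((j:ℕ)+1) ω) := by
              funext j k'
              simp [hprev, Fin.coe_castSucc]
            have hl : ∀ k', lastf (fun (j : Fin (i+1)) (k' : Fin K) =>
                ξ k' ((j:ℕ)+1) ω) k' = ξ k' (i+1) ω := by
              intro k'; simp [hlast, Fin.val_last]
            rw [hψ]
            simp only [hGψ, hp, hl, ← hg]
          have hhisth : ∀ (kk : Fin K) (θθ : Fin H),
              Gψh kk θθ (fun j k' => ξ k' ((j:ℕ)+1) ω) = ψh kk (i+1) θθ ω := by
            intro kk θθ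
            by_cases hθθ : θθ = θTX
            · subst hθθ; simp only [hGψh, if_pos rfl, hhist, hψh_tx]
            · simp only [hGψh, if_neg hθθ, hhist, hψh_ntx kk i θθ ω hθθ]
          rw [hcomb]
          simp only [hhist, hhisth]
  have hhistmeas : ∀ (i : ℕ),
      Measurable (fun (ω : Ω) (j : Fin i) (k' : Fin K) => ξ k' ((j:ℕ)+1) ω) :=
    fun i => measurable_pi_lambda _ (fun j =>
      measurable_pi_lambda _ (fun k' => hξmeas k' _))
  have hμmeas : ∀ (i : ℕ) (k : Fin K) θ, Measurable (fun ω => μb k i θ ω) := by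
    intro i k θ
    obtain ⟨g, hgm, hg⟩ := hmeasfun i
    have : (fun ω => μb k i θ ω)
        = (g k θ) ∘ (fun (ω : Ω) (j : Fin i) (k' : Fin K) => ξ k' ((j:ℕ)+1) ω) :=
      funext fun ω => hg k θ ω
    rw [this]
    exact (hgm k θ).comp (hhistmeas i)
  have hψmeas : ∀ (k : Fin K) (i : ℕ) θ, Measurable (fun ω => ψ k (i+1) θ ω) := by
    intro k i θ
    have : (fun ω => ψ k (i+1) θ ω) = fun ω =>
        μb k i θ ω * L k θ (ξ k (i+1) ω) /
          ∑ θ', μb k i θ' ω * L k θ' (ξ k (i+1) ω) := funext fun ω => hψ k i θ ω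
    rw [this]
    exact ((hμmeas i k θ).mul ((hLmeas k θ).comp (hξmeas k (i+1)))).div
      (Finset.measurable_sum _ (fun θ' _ =>
        (hμmeas i k θ').mul ((hLmeas k θ').comp (hξmeas k (i+1)))))
  -- likelihood-ratio moment
  have hρint : ∀ (k : Fin K) (θ : Fin H) (i : ℕ),
      ∫⁻ ω, ENNReal.ofReal (L k θ (ξ k (i+1) ω) / L k θTX (ξ k (i+1) ω)) ∂P = 1 := by
    intro k θ i
    have hLint : Integrable (L k θ) (ν k) := by
      by_contra hcon
      exact one_ne_zero (by rw [← hLdens k θ, integral_undef hcon])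
    have hm : Measurable (fun x => ENNReal.ofReal (L k θ x / L k θTX x)) :=
      ((hLmeas k θ).div (hLmeas k θTX)).ennreal_ofReal
    rw [← lintegral_map hm (hξmeas k (i+1)), hξdist k (i+1) (Nat.le_add_left 1 i)]
    rw [lintegral_withDensity_eq_lintegral_mul _ (hLmeas k θTX).ennreal_ofReal hm]
    have hpt : ∀ x, ((fun x => ENNReal.ofReal (L k θTX x)) *
        fun x => ENNReal.ofReal (L k θ x / L k θTX x)) x
        = ENNReal.ofReal (L k θ x) := by
      intro x
      rw [Pi.mul_apply, ← ENNReal.ofReal_mul (hLpos k θTX x).le, mul_comm,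
        div_mul_cancel₀ _ (hLpos k θTX x).ne']
    rw [lintegral_congr hpt,
      ← ofReal_integral_eq_lintegral_ofReal hLint
        (Filter.Eventually.of_forall (fun x => (hLpos k θ x).le)),
      hLdens k θ, ENNReal.ofReal_one]
  -- independence factorization
  have hindep : ∀ (i : ℕ) (k : Fin K) (θ θ' : Fin H),
      ∫⁻ ω, ENNReal.ofReal (μb k i θ ω / μb k i θTX ω) *
        ENNReal.ofReal (L k θ' (ξ k (i+1) ω) / L k θTX (ξ k (i+1) ω)) ∂P =
      (∫⁻ ω, ENNReal.ofReal (μb k i θ ω / μb k i θTX ω) ∂P) *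
      ∫⁻ ω, ENNReal.ofReal (L k θ' (ξ k (i+1) ω) / L k θTX (ξ k (i+1) ω)) ∂P := by
    intro i k θ θ'
    obtain ⟨g, hgm, hg⟩ := hmeasfun i
    have hFm : Measurable (fun ω => ENNReal.ofReal (μb k i θ ω / μb k i θTX ω)) :=
      ((hμmeas i k θ).div (hμmeas i k θTX)).ennreal_ofReal
    have hGm : Measurable (fun ω =>
        ENNReal.ofReal (L k θ' (ξ k (i+1) ω) / L k θTX (ξ k (i+1) ω))) :=
      (((hLmeas k θ').div (hLmeas k θTX)).comp (hξmeas k (i+1))).ennreal_ofReal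
    have hbase := hξindep.indepFun_finset (Finset.range i) {i}
      (Finset.disjoint_singleton_right.mpr (by simp))
      (fun j => measurable_pi_lambda _ (fun k' => hξmeas k' _))
    set restr : ({x // x ∈ Finset.range i} → (∀ k', X k')) → (Fin i → ∀ k', X k') :=
      fun t j => t ⟨(j:ℕ), by simpa using j.isLt⟩ with hrestr
    have hrestrm : Measurable restr :=
      measurable_pi_lambda _ (fun j => measurable_pi_apply _)
    have hIF : IndepFun (fun ω => ENNReal.ofReal (μb k i θ ω / μb k i θTX ω))
        (fun ω => ENNReal.ofReal (L k θ' (ξ k (i+1) ω) / L k θTX (ξ k (i+1) ω))) P := by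
      have hcomp := hbase.comp
        (φ := fun t => ENNReal.ofReal (g k θ (restr t) / g k θTX (restr t)))
        (ψ := fun (t : {x // x ∈ ({i} : Finset ℕ)} → (∀ k', X k')) =>
          ENNReal.ofReal (L k θ' (t ⟨i, Finset.mem_singleton_self i⟩ k) /
            L k θTX (t ⟨i, Finset.mem_singleton_self i⟩ k)))
        ((((hgm k θ).comp hrestrm).div ((hgm k θTX).comp hrestrm)).ennreal_ofReal)
        ((((hLmeas k θ').comp ((measurable_pi_apply k).comp (measurable_pi_apply _))).div
          ((hLmeas k θTX).comp ((measurable_pi_apply k).comp (measurable_pi_apply _)))).ennreal_ofReal)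
      have heq1 : (fun ω => ENNReal.ofReal (μb k i θ ω / μb k i θTX ω))
          = (fun t => ENNReal.ofReal (g k θ (restr t) / g k θTX (restr t))) ∘
            (fun ω (j : {x // x ∈ Finset.range i}) (k' : Fin K) => ξ k' ((j:ℕ)+1) ω) := by
        funext ω
        simp only [Function.comp_apply, hrestr]
        rw [hg k θ ω, hg k θTX ω]
      have heq2 : (fun ω => ENNReal.ofReal (L k θ' (ξ k (i+1) ω) / L k θTX (ξ k (i+1) ω)))
          = (fun (t : {x // x ∈ ({i} : Finset ℕ)} → (∀ k', X k')) =>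
              ENNReal.ofReal (L k θ' (t ⟨i, Finset.mem_singleton_self i⟩ k) /
                L k θTX (t ⟨i, Finset.mem_singleton_self i⟩ k))) ∘
            (fun ω (j : {x // x ∈ ({i} : Finset ℕ)}) (k' : Fin K) => ξ k' ((j:ℕ)+1) ω) := by
        funext ω; rfl
      rw [heq1, heq2]
      exact hcomp
    have := lintegral_mul_eq_lintegral_mul_lintegral_of_indepFun hFm hGm hIF
    simpa [Pi.mul_apply] using this
  -- the crucial conservation law for inverse beliefs at θTX
  have hψinteq : ∀ (ℓ : Fin K) (i : ℕ),
      ∫⁻ ω, ENNReal.ofReal (ψ ℓ (i+1) θTX ω)⁻¹ ∂P =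
      ∫⁻ ω, ENNReal.ofReal (μb ℓ i θTX ω)⁻¹ ∂P := by
    intro ℓ i
    have hrat_nonneg : ∀ (θ : Fin H) ω, 0 ≤ μb ℓ i θ ω / μb ℓ i θTX ω :=
      fun θ ω => div_nonneg (hμpos i ℓ θ ω).le (hμpos i ℓ θTX ω).le
    have hρ_nonneg : ∀ (θ : Fin H) ω,
        0 ≤ L ℓ θ (ξ ℓ (i+1) ω) / L ℓ θTX (ξ ℓ (i+1) ω) :=
      fun θ ω => div_nonneg (hLpos ℓ θ _).le (hLpos ℓ θTX _).le
    have hLfun : (fun ω => ENNReal.ofReal (ψ ℓ (i+1) θTX ω)⁻¹)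
        = fun ω => 1 + ∑ θ ∈ Finset.univ.erase θTX,
            ENNReal.ofReal (μb ℓ i θ ω / μb ℓ i θTX ω) *
            ENNReal.ofReal (L ℓ θ (ξ ℓ (i+1) ω) / L ℓ θTX (ξ ℓ (i+1) ω)) := by
      funext ω
      rw [hinv_ψ ℓ i ω,
        ENNReal.ofReal_add zero_le_one (Finset.sum_nonneg (fun θ _ =>
          mul_nonneg (hrat_nonneg θ ω) (hρ_nonneg θ ω))), ENNReal.ofReal_one,
        ENNReal.ofReal_sum_of_nonneg (fun θ _ =>
          mul_nonneg (hrat_nonneg θ ω) (hρ_nonneg θ ω))]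
      congr 1
      exact Finset.sum_congr rfl (fun θ _ => ENNReal.ofReal_mul (hrat_nonneg θ ω))
    have hRfun : (fun ω => ENNReal.ofReal (μb ℓ i θTX ω)⁻¹)
        = fun ω => 1 + ∑ θ ∈ Finset.univ.erase θTX,
            ENNReal.ofReal (μb ℓ i θ ω / μb ℓ i θTX ω) := by
      funext ω
      rw [hinv1μ i ℓ ω,
        ENNReal.ofReal_add zero_le_one (Finset.sum_nonneg (fun θ _ => hrat_nonneg θ ω)),
        ENNReal.ofReal_one,
        ENNReal.ofReal_sum_of_nonneg (fun θ _ => hrat_nonneg θ ω)]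
    rw [hLfun, hRfun, lintegral_add_left measurable_const,
      lintegral_add_left measurable_const]
    congr 1
    rw [lintegral_finset_sum (f := fun θ ω =>
        ENNReal.ofReal (μb ℓ i θ ω / μb ℓ i θTX ω) *
          ENNReal.ofReal (L ℓ θ (ξ ℓ (i+1) ω) / L ℓ θTX (ξ ℓ (i+1) ω))) _
        (fun θ _ =>
        (((hμmeas i ℓ θ).div (hμmeas i ℓ θTX)).ennreal_ofReal).mul
          ((((hLmeas ℓ θ).div (hLmeas ℓ θTX)).comp (hξmeas ℓ (i+1))).ennreal_ofReal)),
      lintegral_finset_sum (f := fun θ ω =>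
        ENNReal.ofReal (μb ℓ i θ ω / μb ℓ i θTX ω)) _ (fun θ _ =>
        ((hμmeas i ℓ θ).div (hμmeas i ℓ θTX)).ennreal_ofReal)]
    refine Finset.sum_congr rfl (fun θ _ => ?_)
    rw [hindep i ℓ θ θ, hρint ℓ θ i, mul_one]
  set C : ℝ≥0∞ := ∑ k, ENNReal.ofReal (μinit k θTX)⁻¹ with hC
  have hCne : C ≠ ⊤ := by
    refine (lt_of_le_of_lt (le_of_eq rfl) ?_).ne
    exact ENNReal.sum_lt_top.mpr (fun k _ => ENNReal.ofReal_lt_top)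
  have hu : ∀ (i : ℕ) (k : Fin K), ∫⁻ ω, ENNReal.ofReal (μb k i θTX ω)⁻¹ ∂P ≤ C := by
    intro i
    induction i with
    | zero =>
        intro k
        have : (fun ω => ENNReal.ofReal (μb k 0 θTX ω)⁻¹)
            = fun _ => ENNReal.ofReal (μinit k θTX)⁻¹ := by
          funext ω; rw [hμb0]
        rw [this, lintegral_const, measure_univ, mul_one]
        exact Finset.single_le_sum (f := fun k => ENNReal.ofReal (μinit k θTX)⁻¹)
          (fun _ _ => zero_le) (Finset.mem_univ k)
    | succ i ih =>
        intro k
        have hmono : ∫⁻ ω, ENNReal.ofReal (μb k (i+1) θTX ω)⁻¹ ∂P ≤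
            ∫⁻ ω, ENNReal.ofReal (∑ ℓ, a ℓ k * (ψ ℓ (i+1) θTX ω)⁻¹) ∂P :=
          lintegral_mono (fun ω => ENNReal.ofReal_le_ofReal (hinv_μ k i ω))
        refine le_trans hmono ?_
        have hpt : ∀ ω, ENNReal.ofReal (∑ ℓ, a ℓ k * (ψ ℓ (i+1) θTX ω)⁻¹)
            = ∑ ℓ, ENNReal.ofReal (a ℓ k) * ENNReal.ofReal (ψ ℓ (i+1) θTX ω)⁻¹ := by
          intro ω
          rw [ENNReal.ofReal_sum_of_nonneg (fun ℓ _ =>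
            mul_nonneg (ha_nonneg ℓ k) (inv_nonneg.mpr (hψpos ℓ i θTX ω).le))]
          exact Finset.sum_congr rfl (fun ℓ _ => ENNReal.ofReal_mul (ha_nonneg ℓ k))
        rw [lintegral_congr hpt,
          lintegral_finset_sum (f := fun ℓ ω =>
            ENNReal.ofReal (a ℓ k) * ENNReal.ofReal (ψ ℓ (i+1) θTX ω)⁻¹) _ (fun ℓ _ =>
            ((hψmeas ℓ i θTX).inv.ennreal_ofReal).const_mul _),
          ]
        have hstep : ∀ ℓ : Fin K,
            ∫⁻ ω, ENNReal.ofReal (a ℓ k) * ENNReal.ofReal (ψ ℓ (i+1) θTX ω)⁻¹ ∂P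
            ≤ ENNReal.ofReal (a ℓ k) * C := by
          intro ℓ
          rw [lintegral_const_mul (f := fun ω => ENNReal.ofReal (ψ ℓ (i+1) θTX ω)⁻¹) _ ((hψmeas ℓ i θTX).inv.ennreal_ofReal)]
          exact mul_le_mul_right (by rw [hψinteq]; exact ih ℓ) _
        refine le_trans (Finset.sum_le_sum (fun ℓ _ => hstep ℓ)) ?_
        rw [← Finset.sum_mul, ← ENNReal.ofReal_sum_of_nonneg (fun ℓ _ => ha_nonneg ℓ k),
          ha_stoch k, ENNReal.ofReal_one, one_mul]
  have hψu : ∀ (i : ℕ) (ℓ : Fin K),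
      ∫⁻ ω, ENNReal.ofReal (ψ ℓ (i+1) θTX ω)⁻¹ ∂P ≤ C := by
    intro i ℓ; rw [hψinteq]; exact hu i ℓ
  -- translation of TendstoInMeasure into an epsilon-delta form
  have tconv : ∀ (f : ℕ → Ω → ℝ), (∀ i ω, f i ω ≤ 1) →
      (TendstoInMeasure P f atTop (fun _ => (1:ℝ)) ↔
        (∀ ε η : ℝ, 0 < ε → 0 < η → ∃ N, ∀ i ≥ N,
          P {ω | ε ≤ 1 - f i ω} ≤ ENNReal.ofReal η)) := by
    intro f hf1
    have hset : ∀ (i : ℕ) (ε : ℝ),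
        {ω | ε ≤ dist (f i ω) ((fun _ => (1:ℝ)) ω)} = {ω | ε ≤ 1 - f i ω} := by
      intro i ε
      ext ω
      simp only [Set.mem_setOf_eq, Real.dist_eq]
      rw [abs_sub_comm, abs_of_nonneg (by linarith [hf1 i ω])]
    rw [tendstoInMeasure_iff_dist]
    constructor
    · intro ht ε η hε hη
      have h2 := ht ε hε
      rw [ENNReal.tendsto_atTop_zero] at h2
      obtain ⟨N, hN⟩ := h2 (ENNReal.ofReal η) (ENNReal.ofReal_pos.mpr hη)
      exact ⟨N, fun i hi => by rw [← hset i ε]; exact hN i hi⟩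
    · intro hcrit ε hε
      rw [ENNReal.tendsto_atTop_zero]
      intro e he
      rcases eq_or_ne e ⊤ with rfl | hetop
      · exact ⟨0, fun i _ => le_top⟩
      · obtain ⟨N, hN⟩ := hcrit ε e.toReal hε (ENNReal.toReal_pos he.ne' hetop)
        refine ⟨N, fun i hi => ?_⟩
        rw [hset i ε]
        exact le_trans (hN i hi) (by rw [ENNReal.ofReal_toReal hetop])
  -- sub-step : if agent j learns, its intermediate belief tends to 1
  have hψtend : ∀ (j : Fin K),
      TendstoInMeasure P (fun i ω => μb j i θTX ω) atTop (fun _ => (1:ℝ)) →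
      ∀ δ' η : ℝ, 0 < δ' → 0 < η → ∃ N, ∀ i ≥ N,
        P {ω | δ' ≤ 1 - ψ j (i+1) θTX ω} ≤ ENNReal.ofReal η := by
    intro j hj δ' η hδ' hη
    obtain ⟨T₂, hT₂1, hT₂⟩ := aux_div_le (H : ℝ≥0∞) (by simp) (η/2) (by linarith)
    have hT₂0 : (0:ℝ) < T₂ := by linarith
    set ηm : ℝ := δ' / T₂ with hηm
    have hηmpos : 0 < ηm := div_pos hδ' hT₂0
    set εj : ℝ := min (1/2) (ηm/2) with hεj
    have hεjpos : 0 < εj := lt_min (by norm_num) (by linarith)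
    obtain ⟨N, hN⟩ := ((tconv (fun i ω => μb j i θTX ω)
      (fun i ω => hμle1 i j _ ω)).mp hj) εj (η/2) hεjpos (by linarith)
    refine ⟨N, fun i hi => ?_⟩
    have hsub : {ω | δ' ≤ 1 - ψ j (i+1) θTX ω} ⊆
        {ω | εj ≤ 1 - μb j i θTX ω} ∪
        ⋃ θ ∈ Finset.univ.erase θTX,
          {ω | T₂ ≤ L j θ (ξ j (i+1) ω) / L j θTX (ξ j (i+1) ω)} := by
      intro ω hω
      simp only [Set.mem_setOf_eq] at hω
      by_contra hcon
      simp only [Set.mem_union, Set.mem_setOf_eq, Set.mem_iUnion, not_or,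
        not_exists, not_le] at hcon
      obtain ⟨hμclose, hρsmall⟩ := hcon
      set μv : ℝ := μb j i θTX ω with hμv
      have hμv0 : 0 < μv := hμpos i j θTX ω
      have hμv1 : μv ≤ 1 := hμle1 i j θTX ω
      have hμhalf : (1:ℝ)/2 ≤ μv := by
        have : εj ≤ 1/2 := min_le_left _ _
        linarith
      have hinv2 : μv⁻¹ ≤ 2 := by
        rw [← one_div]
        rw [div_le_iff₀ hμv0]
        linarith
      have hsum_lt : (μv)⁻¹ - 1 < ηm := by
        have heq : μv⁻¹ - 1 = μv⁻¹ * (1 - μv) := by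
          field_simp
        have h1 : μv⁻¹ * (1 - μv) ≤ 2 * (1 - μv) :=
          mul_le_mul_of_nonneg_right hinv2 (by linarith)
        have h2 : (1:ℝ) - μv < εj := by linarith
        have h3 : εj ≤ ηm/2 := min_le_right _ _
        calc μv⁻¹ - 1 = μv⁻¹ * (1 - μv) := heq
          _ ≤ 2 * (1 - μv) := h1
          _ < 2 * εj := by nlinarith
          _ ≤ ηm := by linarith
      set ψv : ℝ := ψ j (i+1) θTX ω with hψv
      have hψv0 : 0 < ψv := hψpos j i θTX ω
      have hψv1 : ψv < 1 := hψlt1 j i ω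
      have hA : 1 - ψv ≤ ψv⁻¹ - 1 := by
        have hc : ψv * ψv⁻¹ = 1 := mul_inv_cancel₀ hψv0.ne'
        nlinarith [sq_nonneg (ψv - 1)]
      have hB : ψv⁻¹ - 1 ≤ T₂ * (μv⁻¹ - 1) := by
        rw [hψv, hinv_ψ j i ω, hμv, hinv1μ i j ω]
        have hle : ∑ θ ∈ Finset.univ.erase θTX,
            (μb j i θ ω / μb j i θTX ω) * (L j θ (ξ j (i+1) ω) / L j θTX (ξ j (i+1) ω))
            ≤ ∑ θ ∈ Finset.univ.erase θTX, (μb j i θ ω / μb j i θTX ω) * T₂ := by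
          refine Finset.sum_le_sum (fun θ hθ => ?_)
          exact mul_le_mul_of_nonneg_left (le_of_lt (hρsmall θ (by simpa using hθ)))
            (div_nonneg (hμpos i j θ ω).le (hμpos i j θTX ω).le)
        rw [← Finset.sum_mul] at hle
        calc (1:ℝ) + ∑ θ ∈ Finset.univ.erase θTX,
              (μb j i θ ω / μb j i θTX ω) * (L j θ (ξ j (i+1) ω) / L j θTX (ξ j (i+1) ω)) - 1
            = ∑ θ ∈ Finset.univ.erase θTX,
              (μb j i θ ω / μb j i θTX ω) * (L j θ (ξ j (i+1) ω) / L j θTX (ξ j (i+1) ω)) := by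
              ring
          _ ≤ (∑ θ ∈ Finset.univ.erase θTX, μb j i θ ω / μb j i θTX ω) * T₂ := hle
          _ = T₂ * (1 + ∑ θ ∈ Finset.univ.erase θTX, μb j i θ ω / μb j i θTX ω - 1) := by
              ring
      have : δ' < δ' := by
        calc δ' ≤ 1 - ψv := hω
          _ ≤ ψv⁻¹ - 1 := hA
          _ ≤ T₂ * (μv⁻¹ - 1) := hB
          _ < T₂ * ηm := by exact mul_lt_mul_of_pos_left hsum_lt hT₂0
          _ = δ' := by rw [hηm]; field_simp
      exact absurd this (lt_irrefl δ')
    have hb1 : P {ω | εj ≤ 1 - μb j i θTX ω} ≤ ENNReal.ofReal (η/2) := hN i hi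
    have hb2 : P (⋃ θ ∈ Finset.univ.erase θTX,
        {ω | T₂ ≤ L j θ (ξ j (i+1) ω) / L j θTX (ξ j (i+1) ω)}) ≤
        ENNReal.ofReal (η/2) := by
      refine le_trans (measure_biUnion_finset_le _ _) ?_
      have hone : ∀ θ ∈ Finset.univ.erase θTX,
          P {ω | T₂ ≤ L j θ (ξ j (i+1) ω) / L j θTX (ξ j (i+1) ω)} ≤
          1 / ENNReal.ofReal T₂ := by
        intro θ _
        exact aux_markov P _ (((hLmeas j θ).div (hLmeas j θTX)).comp (hξmeas j (i+1)))
          1 (le_of_eq (hρint j θ i)) T₂ hT₂0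
      refine le_trans (Finset.sum_le_sum hone) ?_
      rw [Finset.sum_const, nsmul_eq_mul]
      calc ((Finset.univ.erase θTX).card : ℝ≥0∞) * (1 / ENNReal.ofReal T₂)
          ≤ (H : ℝ≥0∞) * (1 / ENNReal.ofReal T₂) := by
            refine mul_le_mul_left ?_ _
            rw [Finset.card_erase_of_mem (Finset.mem_univ _), Finset.card_univ,
              Fintype.card_fin]
            exact_mod_cast Nat.cast_le.mpr (Nat.sub_le H 1)
        _ = (H : ℝ≥0∞) / ENNReal.ofReal T₂ := by
            rw [mul_one_div]
        _ ≤ ENNReal.ofReal (η/2) := hT₂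
    refine le_trans (measure_mono hsub) ?_
    refine le_trans (measure_union_le _ _) ?_
    refine le_trans (add_le_add hb1 hb2) ?_
    rw [← ENNReal.ofReal_add (by linarith) (by linarith)]
    norm_num
  -- main propagation step along one edge
  have key : ∀ j k : Fin K, 0 < a j k →
      TendstoInMeasure P (fun i ω => μb j i θTX ω) atTop (fun _ => (1:ℝ)) →
      TendstoInMeasure P (fun i ω => μb k i θTX ω) atTop (fun _ => (1:ℝ)) := by
    intro j k hajk hj
    rcases eq_or_ne j k with rfl | hjk
    · exact hj
    rw [tconv _ (fun i ω => hμle1 i k _ ω)]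
    intro ε η hε hη
    set D : ℝ≥0∞ := ((K:ℝ≥0∞)+1) * C + (H:ℝ≥0∞) with hD
    have hDne : D ≠ ⊤ := by
      rw [hD]
      exact ENNReal.add_ne_top.mpr ⟨ENNReal.mul_ne_top (by simp) hCne, by simp⟩
    obtain ⟨T, hT1, hTb⟩ := aux_div_le D hDne (η/2) (by linarith)
    have hT0 : (0:ℝ) < T := by linarith
    have hα0 : 0 < a j k := hajk
    have haLe1 : ∀ ℓ : Fin K, a ℓ k ≤ 1 := by
      intro ℓ
      rw [← ha_stoch k]
      exact Finset.single_le_sum (fun ℓ' _ => ha_nonneg ℓ' k) (Finset.mem_univ ℓ)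
    set Xc : ℝ := (T^2)^(K-1) with hXc
    have hT2one : (1:ℝ) ≤ T^2 := by nlinarith
    have hXc1 : (1:ℝ) ≤ Xc := one_le_pow₀ hT2one
    set R : ℝ := (H:ℝ) * Xc + 1 with hR
    have hH0 : (2:ℝ) ≤ (H:ℝ) := by exact_mod_cast hH
    have hRpos : 0 < R := by nlinarith
    set E : ℝ := min 1 (ε / R) with hE
    have hEpos : 0 < E := lt_min one_pos (div_pos hε hRpos)
    set δ'0 : ℝ := E ^ (a j k)⁻¹ / T with hδ'0
    have hδ'0pos : 0 < δ'0 := div_pos (Real.rpow_pos_of_pos hEpos _) hT0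
    obtain ⟨N, hN⟩ := hψtend j hj δ'0 (η/2) hδ'0pos (by linarith)
    refine ⟨N+1, fun i hi => ?_⟩
    obtain ⟨m, rfl⟩ : ∃ m, i = m+1 := ⟨i-1, by omega⟩
    have hm : m ≥ N := by omega
    have hsub : {ω | ε ≤ 1 - μb k (m+1) θTX ω} ⊆
        ((⋃ ℓ ∈ (Finset.univ : Finset (Fin K)), {ω | T ≤ (ψ ℓ (m+1) θTX ω)⁻¹}) ∪
          {ω | T ≤ (μb k m θTX ω)⁻¹}) ∪
        ((⋃ θ ∈ Finset.univ.erase θTX,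
            {ω | T ≤ L k θ (ξ k (m+1) ω) / L k θTX (ξ k (m+1) ω)}) ∪
          {ω | δ'0 ≤ 1 - ψ j (m+1) θTX ω}) := by
      intro ω hω
      simp only [Set.mem_setOf_eq] at hω
      by_contra hcon
      simp only [Set.mem_union, not_or] at hcon
      obtain ⟨⟨h1, h2⟩, h3, h4⟩ := hcon
      have hψT : ∀ ℓ : Fin K, (ψ ℓ (m+1) θTX ω)⁻¹ < T := by
        intro ℓ
        by_contra hle
        push_neg at hle
        exact h1 (Set.mem_iUnion₂.mpr ⟨ℓ, Finset.mem_univ ℓ, hle⟩)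
      have hμT : (μb k m θTX ω)⁻¹ < T := by
        by_contra hle
        push_neg at hle
        exact h2 hle
      have hρT : ∀ θ : Fin H, θ ≠ θTX →
          L k θ (ξ k (m+1) ω) / L k θTX (ξ k (m+1) ω) < T := by
        intro θ hθ
        by_contra hle
        push_neg at hle
        exact h3 (Set.mem_iUnion₂.mpr
          ⟨θ, Finset.mem_erase.mpr ⟨hθ, Finset.mem_univ θ⟩, hle⟩)
      have hjg : 1 - ψ j (m+1) θTX ω < δ'0 := by
        by_contra hle
        push_neg at hle
        exact h4 hle
      -- per-hypothesis ratio bound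
      have hfactor : ∀ θ : Fin H, θ ≠ θTX →
          μb k (m+1) θ ω / μb k (m+1) θTX ω ≤ E * Xc := by
        intro θ hθ
        rw [hratio k m θ ω,
          ← Finset.mul_prod_erase Finset.univ _ (Finset.mem_univ j)]
        have hbasej0 : (0:ℝ) ≤
            (if j = k then ψ j (m+1) θ ω else ψh j (m+1) θ ω) / ψ j (m+1) θTX ω :=
          div_nonneg (hBpos k j m θ ω).le (hψpos j m θTX ω).le
        have hjle : (if j = k then ψ j (m+1) θ ω else ψh j (m+1) θ ω) /
            ψ j (m+1) θTX ω ≤ E ^ (a j k)⁻¹ := by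
          rw [if_neg hjk, hψh_ntx j m θ ω hθ]
          have h1ψ : 0 ≤ 1 - ψ j (m+1) θTX ω := by linarith [hψlt1 j m ω]
          have e1 : (1 - ψ j (m+1) θTX ω)/((H:ℝ)-1) ≤ δ'0 := by
            have := div_le_self h1ψ hH1
            linarith
          have e2 : (ψ j (m+1) θTX ω)⁻¹ ≤ T := (hψT j).le
          have e3 : (1 - ψ j (m+1) θTX ω)/((H:ℝ)-1) / ψ j (m+1) θTX ω ≤ δ'0 * T := by
            rw [div_eq_mul_inv ((1 - ψ j (m+1) θTX ω)/((H:ℝ)-1))]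
            exact mul_le_mul e1 e2 (inv_nonneg.mpr (hψpos j m θTX ω).le) hδ'0pos.le
          refine le_trans e3 (le_of_eq ?_)
          rw [hδ'0, div_mul_cancel₀ _ hT0.ne']
        have hfj : ((if j = k then ψ j (m+1) θ ω else ψh j (m+1) θ ω) /
            ψ j (m+1) θTX ω) ^ (a j k) ≤ E := by
          calc ((if j = k then ψ j (m+1) θ ω else ψh j (m+1) θ ω) /
              ψ j (m+1) θTX ω) ^ (a j k)
              ≤ (E ^ (a j k)⁻¹) ^ (a j k) :=
                Real.rpow_le_rpow hbasej0 hjle hα0.le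
            _ = E := by
                rw [← Real.rpow_mul hEpos.le, inv_mul_cancel₀ hα0.ne', Real.rpow_one]
        have hfac : ∀ ℓ ∈ Finset.univ.erase j,
            ((if ℓ = k then ψ ℓ (m+1) θ ω else ψh ℓ (m+1) θ ω) /
              ψ ℓ (m+1) θTX ω) ^ (a ℓ k) ≤ T^2 := by
          intro ℓ _
          have hbase0 : (0:ℝ) ≤
              (if ℓ = k then ψ ℓ (m+1) θ ω else ψh ℓ (m+1) θ ω) / ψ ℓ (m+1) θTX ω :=
            div_nonneg (hBpos k ℓ m θ ω).le (hψpos ℓ m θTX ω).le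
          have hbase : (if ℓ = k then ψ ℓ (m+1) θ ω else ψh ℓ (m+1) θ ω) /
              ψ ℓ (m+1) θTX ω ≤ T^2 := by
            by_cases hlk : ℓ = k
            · subst hlk
              rw [if_pos rfl]
              have heq : ψ ℓ (m+1) θ ω / ψ ℓ (m+1) θTX ω =
                  (μb ℓ m θ ω / μb ℓ m θTX ω) *
                  (L ℓ θ (ξ ℓ (m+1) ω) / L ℓ θTX (ξ ℓ (m+1) ω)) := by
                rw [hψ ℓ m θ ω, hψ ℓ m θTX ω, div_div_div_cancel_right₀ _ _,
                  div_mul_div_comm]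
                exact (hSpos ℓ m ω).ne'
              rw [heq]
              have hr1 : μb ℓ m θ ω / μb ℓ m θTX ω ≤ (μb ℓ m θTX ω)⁻¹ := by
                rw [div_eq_mul_inv]
                nlinarith [mul_nonneg (sub_nonneg.mpr (hμle1 m ℓ θ ω))
                  (inv_nonneg.mpr (hμpos m ℓ θTX ω).le)]
              have hr2 : μb ℓ m θ ω / μb ℓ m θTX ω ≤ T :=
                le_trans hr1 (hμT).le
              have hρ2 : L ℓ θ (ξ ℓ (m+1) ω) / L ℓ θTX (ξ ℓ (m+1) ω) ≤ T :=
                (hρT θ hθ).le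
              have hn1 : (0:ℝ) ≤ μb ℓ m θ ω / μb ℓ m θTX ω :=
                div_nonneg (hμpos m ℓ θ ω).le (hμpos m ℓ θTX ω).le
              have hn2 : (0:ℝ) ≤ L ℓ θ (ξ ℓ (m+1) ω) / L ℓ θTX (ξ ℓ (m+1) ω) :=
                div_nonneg (hLpos ℓ θ _).le (hLpos ℓ θTX _).le
              nlinarith
            · rw [if_neg hlk, hψh_ntx ℓ m θ ω hθ]
              have hx1 : (1 - ψ ℓ (m+1) θTX ω)/((H:ℝ)-1) ≤ 1 := by
                rw [div_le_one (by linarith)]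
                have := hψpos ℓ m θTX ω
                linarith
              have hx0 : (0:ℝ) ≤ (1 - ψ ℓ (m+1) θTX ω)/((H:ℝ)-1) :=
                div_nonneg (by linarith [hψlt1 ℓ m ω]) (by linarith)
              have hx2 : (ψ ℓ (m+1) θTX ω)⁻¹ < T := hψT ℓ
              have hx3 : (0:ℝ) ≤ (ψ ℓ (m+1) θTX ω)⁻¹ :=
                inv_nonneg.mpr (hψpos ℓ m θTX ω).le
              rw [div_eq_mul_inv ((1 - ψ ℓ (m+1) θTX ω)/((H:ℝ)-1))]
              nlinarith [mul_le_mul_of_nonneg_right hx1 hx3]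
          calc ((if ℓ = k then ψ ℓ (m+1) θ ω else ψh ℓ (m+1) θ ω) /
              ψ ℓ (m+1) θTX ω) ^ (a ℓ k)
              ≤ (T^2) ^ (a ℓ k) :=
                Real.rpow_le_rpow hbase0 hbase (ha_nonneg ℓ k)
            _ ≤ (T^2) ^ (1:ℝ) :=
                Real.rpow_le_rpow_of_exponent_le hT2one (haLe1 ℓ)
            _ = T^2 := Real.rpow_one _
        have hprodn : (0:ℝ) ≤ ∏ ℓ ∈ Finset.univ.erase j,
            ((if ℓ = k then ψ ℓ (m+1) θ ω else ψh ℓ (m+1) θ ω) /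
              ψ ℓ (m+1) θTX ω) ^ (a ℓ k) :=
          Finset.prod_nonneg (fun ℓ _ => Real.rpow_nonneg
            (div_nonneg (hBpos k ℓ m θ ω).le (hψpos ℓ m θTX ω).le) _)
        have hprod : ∏ ℓ ∈ Finset.univ.erase j,
            ((if ℓ = k then ψ ℓ (m+1) θ ω else ψh ℓ (m+1) θ ω) /
              ψ ℓ (m+1) θTX ω) ^ (a ℓ k) ≤ Xc := by
          have hcard : (Finset.univ.erase j).card = K - 1 := by
            rw [Finset.card_erase_of_mem (Finset.mem_univ _), Finset.card_univ,
              Fintype.card_fin]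
          calc ∏ ℓ ∈ Finset.univ.erase j,
              ((if ℓ = k then ψ ℓ (m+1) θ ω else ψh ℓ (m+1) θ ω) /
                ψ ℓ (m+1) θTX ω) ^ (a ℓ k)
              ≤ ∏ _ℓ ∈ Finset.univ.erase j, T^2 :=
                Finset.prod_le_prod (fun ℓ _ => Real.rpow_nonneg
                  (div_nonneg (hBpos k ℓ m θ ω).le (hψpos ℓ m θTX ω).le) _) hfac
            _ = Xc := by rw [Finset.prod_const, hcard, hXc]
        exact mul_le_mul hfj hprod hprodn hEpos.le
      -- summation
      have hsum1 : 1 - μb k (m+1) θTX ω =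
          ∑ θ ∈ Finset.univ.erase θTX, μb k (m+1) θ ω := by
        have hs := hμsum (m+1) k ω
        rw [← Finset.add_sum_erase _ _ (Finset.mem_univ θTX)] at hs
        linarith
      have hsum2 : 1 - μb k (m+1) θTX ω ≤
          ∑ θ ∈ Finset.univ.erase θTX, μb k (m+1) θ ω / μb k (m+1) θTX ω := by
        rw [hsum1]
        refine Finset.sum_le_sum (fun θ _ => ?_)
        rw [le_div_iff₀ (hμpos (m+1) k θTX ω)]
        nlinarith [hμpos (m+1) k θ ω, hμle1 (m+1) k θTX ω]
      have hsum3 : ∑ θ ∈ Finset.univ.erase θTX,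
          μb k (m+1) θ ω / μb k (m+1) θTX ω ≤ ((H:ℝ)-1) * (E * Xc) := by
        refine le_trans (Finset.sum_le_sum (fun θ hθ =>
          hfactor θ (Finset.ne_of_mem_erase hθ))) ?_
        rw [Finset.sum_const, nsmul_eq_mul, hcard]
      have hfinal : 1 - μb k (m+1) θTX ω < ε := by
        have hEle : E ≤ ε / R := min_le_right _ _
        have hER : E * R ≤ ε := by
          rw [← le_div_iff₀ hRpos]
          exact hEle
        have hER' : E * ((H:ℝ)*Xc+1) ≤ ε := by rw [← hR]; exact hER
        nlinarith [hEpos, hXc1]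
      linarith
    refine le_trans (measure_mono hsub) ?_
    refine le_trans (measure_union_le _ _) ?_
    have hA : P ((⋃ ℓ ∈ (Finset.univ : Finset (Fin K)),
        {ω | T ≤ (ψ ℓ (m+1) θTX ω)⁻¹}) ∪ {ω | T ≤ (μb k m θTX ω)⁻¹}) ≤
        ((K:ℝ≥0∞)+1) * C / ENNReal.ofReal T := by
      refine le_trans (measure_union_le _ _) ?_
      have hA1 : P (⋃ ℓ ∈ (Finset.univ : Finset (Fin K)),
          {ω | T ≤ (ψ ℓ (m+1) θTX ω)⁻¹}) ≤ (K:ℝ≥0∞) * (C / ENNReal.ofReal T) := by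
        refine le_trans (measure_biUnion_finset_le _ _) ?_
        refine le_trans (Finset.sum_le_sum (fun ℓ _ =>
          aux_markov P (fun ω => (ψ ℓ (m+1) θTX ω)⁻¹)
            ((hψmeas ℓ m θTX).inv) C (hψu m ℓ) T hT0)) ?_
        rw [Finset.sum_const, nsmul_eq_mul, Finset.card_univ, Fintype.card_fin]
      have hA2 : P {ω | T ≤ (μb k m θTX ω)⁻¹} ≤ C / ENNReal.ofReal T :=
        aux_markov P (fun ω => (μb k m θTX ω)⁻¹)
          ((hμmeas m k θTX).inv) C (hu m k) T hT0
      refine le_trans (add_le_add hA1 hA2) (le_of_eq ?_)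
      rw [add_mul, one_mul, ENNReal.add_div, mul_div_assoc]
    have hB : P ((⋃ θ ∈ Finset.univ.erase θTX,
        {ω | T ≤ L k θ (ξ k (m+1) ω) / L k θTX (ξ k (m+1) ω)}) ∪
        {ω | δ'0 ≤ 1 - ψ j (m+1) θTX ω}) ≤
        (H:ℝ≥0∞) / ENNReal.ofReal T + ENNReal.ofReal (η/2) := by
      refine le_trans (measure_union_le _ _) (add_le_add ?_ (hN m hm))
      refine le_trans (measure_biUnion_finset_le _ _) ?_
      refine le_trans (Finset.sum_le_sum (fun θ _ =>
        aux_markov P (fun ω => L k θ (ξ k (m+1) ω) / L k θTX (ξ k (m+1) ω))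
          (((hLmeas k θ).div (hLmeas k θTX)).comp (hξmeas k (m+1)))
          1 (le_of_eq (hρint k θ m)) T hT0)) ?_
      rw [Finset.sum_const, nsmul_eq_mul]
      calc ((Finset.univ.erase θTX).card : ℝ≥0∞) * (1 / ENNReal.ofReal T)
          ≤ (H : ℝ≥0∞) * (1 / ENNReal.ofReal T) := by
            refine mul_le_mul_left ?_ _
            rw [Finset.card_erase_of_mem (Finset.mem_univ _), Finset.card_univ,
              Fintype.card_fin]
            exact Nat.cast_le.mpr (Nat.sub_le H 1)
        _ = (H : ℝ≥0∞) / ENNReal.ofReal T := by rw [mul_one_div]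
    refine le_trans (add_le_add hA hB) ?_
    rw [← add_assoc]
    have hcollect : ((K:ℝ≥0∞)+1) * C / ENNReal.ofReal T +
        (H:ℝ≥0∞) / ENNReal.ofReal T = D / ENNReal.ofReal T := by
      rw [hD, ENNReal.add_div]
    rw [hcollect]
    refine le_trans (add_le_add hTb le_rfl) (le_of_eq ?_)
    rw [← ENNReal.ofReal_add (by linarith) (by linarith)]
    norm_num
  -- propagation along paths
  intro k hk
  obtain ⟨n, hn⟩ := ha_prim
  have hreach : ∀ (m : ℕ) (k' : Fin K), 0 < ((Matrix.of a) ^ m) h k' →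
      TendstoInMeasure P (fun i ω => μb k' i θTX ω) atTop (fun _ => (1:ℝ)) := by
    intro m
    induction m with
    | zero =>
        intro k' hk'
        simp only [pow_zero, Matrix.one_apply] at hk'
        by_cases hkh : h = k'
        · subst hkh; exact hh
        · simp [hkh] at hk'
    | succ m ih =>
        intro k' hk'
        rw [pow_succ, Matrix.mul_apply] at hk'
        obtain ⟨j, -, hj⟩ := Finset.exists_lt_of_sum_lt (s := Finset.univ)
          (f := fun _ => (0:ℝ)) (by simpa using hk')
        have hj1 : 0 < ((Matrix.of a) ^ m) h j * (Matrix.of a) j k' := lt_of_le_of_lt le_rfl hj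
        have hjm : 0 < ((Matrix.of a) ^ m) h j := by
          by_contra hcon
          push_neg at hcon
          nlinarith [ha_nonneg j k', mul_nonpos_of_nonpos_of_nonneg hcon (ha_nonneg j k')]
        have hjk : 0 < a j k' := by
          by_contra hcon
          push_neg at hcon
          nlinarith
        exact key j k' hjk (ih j hjm)
  exact hreach n k (hn h k)
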